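/- Let q ≥ 2 and n ≥ 1 be integers, and suppose S = (s_i) is a special orientable sequence of order n and period m over ℤ_q. Suppose w_q(S), the weight of S modulo q, has additive order h in ℤ_q. Then every T ∈ D^{-1}(S) is a special orientable sequence of order n+1 of period hm, any two elements of D^{-1}(S) are translates of one another, and D^{-1}(S) consists of h shifts of each of q/h mutually special-o-disjoint special orientable sequences of order n+1 and period hm which are translates of one another. -/

import Mathlib

namespace OSeq

variable {q : ℕ}

/-- The `n`-tuple (window) of the sequence `s` at position `i`. -/
def window (s : ℤ → ZMod q) (n : ℕ) (i : ℤ) : Fin n → ZMod q :=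
  fun k => s (i + (k : ℕ))

/-- The reverse of an `n`-tuple. -/
def tupRev {n : ℕ} (u : Fin n → ZMod q) : Fin n → ZMod q :=
  fun k => u k.rev

/-- `m` is the (least) period of the periodic sequence `s`. -/
def IsPeriod (s : ℤ → ZMod q) (m : ℕ) : Prop :=
  0 < m ∧ (∀ i : ℤ, s (i + (m : ℤ)) = s i) ∧
    ∀ m' : ℕ, 0 < m' → (∀ i : ℤ, s (i + (m' : ℤ)) = s i) → m ≤ m'

/-- `s` is an `n`-window sequence of period `m`. -/
def IsNWindowSeq (s : ℤ → ZMod q) (n m : ℕ) : Prop :=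
  IsPeriod s m ∧ ∀ i j : ℤ, window s n i = window s n j → i ≡ j [ZMOD (m : ℤ)]

/-- `s` is an orientable sequence of order `n` and period `m`. -/
def IsOS (s : ℤ → ZMod q) (n m : ℕ) : Prop :=
  IsNWindowSeq s n m ∧ ∀ i j : ℤ, window s n i ≠ tupRev (window s n j)

/-- `s` is a negative orientable sequence of order `n` and period `m`. -/
def IsNOS (s : ℤ → ZMod q) (n m : ℕ) : Prop :=
  IsNWindowSeq s n m ∧ ∀ i j : ℤ, window s n i ≠ - tupRev (window s n j)

/-- `s` is a special orientable sequence of order `n` and period `m`: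
orientable and also negative orientable. -/
def IsSpecialOS (s : ℤ → ZMod q) (n m : ℕ) : Prop :=
  IsOS s n m ∧ ∀ i j : ℤ, window s n i ≠ - tupRev (window s n j)

/-- The weight modulo `q` of one period of `s`. -/
def wq (s : ℤ → ZMod q) (m : ℕ) : ZMod q :=
  ∑ i ∈ Finset.range m, s (i : ℤ)

/-- The alternating sign weight modulo `q` of one period of `s`. -/
def wqA (s : ℤ → ZMod q) (m : ℕ) : ZMod q :=
  ∑ i ∈ Finset.range m, (-1 : ZMod q) ^ (m - 1 - i) * s (i : ℤ)

/-- The Lempel homomorphism `D` on sequences. -/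
def D (t : ℤ → ZMod q) : ℤ → ZMod q := fun j => t (j + 1) - t j

/-- The homomorphism `A` on sequences. -/
def A (t : ℤ → ZMod q) : ℤ → ZMod q := fun j => t (j + 1) + t j

/-- Shift of a sequence by `c`. -/
def shift (t : ℤ → ZMod q) (c : ℤ) : ℤ → ZMod q := fun i => t (i + c)

/-- `t'` is a translate of `t`. -/
def IsTranslate (t t' : ℤ → ZMod q) : Prop := ∃ c : ZMod q, ∀ i : ℤ, t' i = t i + c

/-- `t'` is an alternating sign translate of `t`. -/
def IsAltTranslate (t t' : ℤ → ZMod q) : Prop :=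
  ∃ c : ZMod q, ∀ i : ℤ, t' i = t i + (if i % 2 = 0 then c else -c)

/-- Two sequences are (`n`-window) disjoint. -/
def WindowDisjoint (n : ℕ) (s t : ℤ → ZMod q) : Prop :=
  ∀ i j : ℤ, window s n i ≠ window t n j

/-- Orientable-disjoint. -/
def ODisjoint (n : ℕ) (s t : ℤ → ZMod q) : Prop :=
  WindowDisjoint n s t ∧ ∀ i j : ℤ, window s n i ≠ tupRev (window t n j)

/-- Negative orientable-disjoint (no-disjoint). -/
def NODisjoint (n : ℕ) (s t : ℤ → ZMod q) : Prop :=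
  WindowDisjoint n s t ∧ ∀ i j : ℤ, window s n i ≠ - tupRev (window t n j)

/-- Special-orientable-disjoint. -/
def SpecialODisjoint (n : ℕ) (s t : ℤ → ZMod q) : Prop :=
  ODisjoint n s t ∧ ∀ i j : ℤ, window s n i ≠ - tupRev (window t n j)

/-- The string `a^t` appears in `s`. -/
def HasString (s : ℤ → ZMod q) (a : ZMod q) (t : ℕ) : Prop :=
  ∃ j : ℤ, ∀ k : ℕ, k < t → s (j + (k : ℤ)) = a

/-- There is a run `a^t` of `a` in `s` starting at position `j`. -/
def IsRunAt (s : ℤ → ZMod q) (a : ZMod q) (j : ℤ) (t : ℕ) : Prop :=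
  (∀ k : ℕ, k < t → s (j + (k : ℤ)) = a) ∧ s (j - 1) ≠ a ∧ s (j + (t : ℤ)) ≠ a

/-- `a^t` is a maximal run of `a` in `s`: the string `a^t` appears and every
string `a^{t'}` appearing in `s` has `t' ≤ t`. -/
def IsMaxRun (s : ℤ → ZMod q) (a : ZMod q) (t : ℕ) : Prop :=
  HasString s a t ∧ ∀ t' : ℕ, HasString s a t' → t' ≤ t

/-- `k`-th entry of the alternating string `a, -a, a, -a, ...`. -/
def altVal (a : ZMod q) (k : ℕ) : ZMod q := if k % 2 = 0 then a else -a

/-- The signed string `ạ^t` (alternating `a, -a, ...`) appears in `s`. -/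
def HasSignedString (s : ℤ → ZMod q) (a : ZMod q) (t : ℕ) : Prop :=
  ∃ j : ℤ, ∀ k : ℕ, k < t → s (j + (k : ℤ)) = altVal a k

/-- There is a signed run `ạ^t` of `a` in `s` starting at position `j`. -/
def IsSignedRunAt (s : ℤ → ZMod q) (a : ZMod q) (j : ℤ) (t : ℕ) : Prop :=
  (∀ k : ℕ, k < t → s (j + (k : ℤ)) = altVal a k) ∧
    s (j - 1) ≠ -a ∧ s (j + (t : ℤ)) ≠ altVal a t

/-- `ạ^t` is a maximal signed run of `a` in `s`. -/
def IsMaxSignedRun (s : ℤ → ZMod q) (a : ZMod q) (t : ℕ) : Prop :=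
  HasSignedString s a t ∧ ∀ t' : ℕ, HasSignedString s a t' → t' ≤ t

/-- The sequence obtained from the ring sequence `[s_0,...,s_{m-1}]` of `s` by
inserting one extra symbol `a` at ring position `r`, i.e. with ring sequence
`[s_0,...,s_{r-1}, a, s_r, ..., s_{m-1}]` of length `m+1`. -/
def insert1 (s : ℤ → ZMod q) (m r : ℕ) (a : ZMod q) : ℤ → ZMod q :=
  fun j =>
    let j' := (j % ((m : ℤ) + 1)).toNat
    if j' < r then s (j' : ℤ) else if j' = r then a else s ((j' : ℤ) - 1)

/-- The sequence obtained from the ring sequence `[s_0,...,s_{m-1}]` of `s` by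
inserting the two symbols `a, -a` at ring position `r`, i.e. with ring sequence
`[s_0,...,s_{r-1}, a, -a, s_r, ..., s_{m-1}]` of length `m+2`. -/
def insert2 (s : ℤ → ZMod q) (m r : ℕ) (a : ZMod q) : ℤ → ZMod q :=
  fun j =>
    let j' := (j % ((m : ℤ) + 2)).toNat
    if j' < r then s (j' : ℤ)
    else if j' = r then a
    else if j' = r + 1 then -a
    else s ((j' : ℤ) - 2)

/-- The operation `E_a` (with the convention `E_0(S) = S`). -/
def Emod (s : ℤ → ZMod q) (m r : ℕ) (a : ZMod q) : ℤ → ZMod q :=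
  if a = 0 then s else insert1 s m r a

/-- A sequence is good (for order `n`) if every run of `0` has length at most `n-2`. -/
def GoodSeq (s : ℤ → ZMod q) (n : ℕ) : Prop :=
  ∀ t : ℕ, HasString s 0 t → t ≤ n - 2

/-- A tuple is uniform if it is constant. -/
def Uniform {n : ℕ} (u : Fin n → ZMod q) : Prop := ∃ c : ZMod q, ∀ i, u i = c

/-- A tuple is symmetric if it equals its own reverse. -/
def Symm {n : ℕ} (u : Fin n → ZMod q) : Prop := ∀ i : Fin n, u i = u i.rev

/-- An `n`-tuple is `m`-symmetric (`m ≤ n`) if `u_i = u_{m-1-i}` for `0 ≤ i ≤ m-1`. -/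
def MSymm {n : ℕ} (u : Fin n → ZMod q) (m : ℕ) (hm : m ≤ n) : Prop :=
  ∀ i : Fin m, u (Fin.castLE hm i) = u (Fin.castLE hm i.rev)

/-- An `n`-tuple (`n ≥ 2`) is alternating. -/
def Alternating {n : ℕ} (hn : 2 ≤ n) (u : Fin n → ZMod q) : Prop :=
  u ⟨0, by omega⟩ ≠ u ⟨1, by omega⟩ ∧
    ∀ i : Fin n, u i = if (i : ℕ) % 2 = 0 then u ⟨0, by omega⟩ else u ⟨1, by omega⟩

/-- `L_n(v)`: the set of `n`-tuples whose first `n-r` entries agree with the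
`(n-r)`-tuple `v`. -/
def Lset (n r : ℕ) (v : Fin (n - r) → ZMod q) : Set (Fin n → ZMod q) :=
  {u | ∀ i : Fin (n - r), u (Fin.castLE (Nat.sub_le n r) i) = v i}

/-- The `n`-tuple `u` appears in the sequence `s`. -/
def AppearsIn (s : ℤ → ZMod q) (n : ℕ) (u : Fin n → ZMod q) : Prop :=
  ∃ i : ℤ, window s n i = u

end OSeq

open OSeq

namespace OSeqAux
open OSeq
variable {q : ℕ} {s : ℤ → ZMod q} {m : ℕ}

lemma const_of_step (f : ℤ → ZMod q) (hf : ∀ i, f (i + 1) = f i) : ∀ i, f i = f 0 := by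
  intro i
  induction i using Int.induction_on with
  | zero => rfl
  | succ k ih => rw [hf]; exact ih
  | pred k ih =>
    have h2 := hf (-(k : ℤ) - 1)
    have : (-(k:ℤ) - 1 + 1) = -(k:ℤ) := by ring
    rw [this] at h2
    rw [← h2]; exact ih

lemma window_ext_iff {n : ℕ} {s t : ℤ → ZMod q} {i j : ℤ} :
    window s n i = window t n j ↔ ∀ k : ℕ, k < n → s (i + (k : ℕ)) = t (j + (k : ℕ)) := by
  constructor
  · intro H k hk; exact congrFun H ⟨k, hk⟩
  · intro H; funext k; exact H k k.isLt

lemma window_rev_iff {n : ℕ} {s t : ℤ → ZMod q} {i j : ℤ} :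
    window s n i = tupRev (window t n j) ↔
      ∀ k : ℕ, k < n → s (i + (k : ℕ)) = t (j + ((n - (k + 1) : ℕ) : ℤ)) := by
  constructor
  · intro H k hk; exact congrFun H ⟨k, hk⟩
  · intro H; funext k; exact H k k.isLt

lemma window_neg_rev_iff {n : ℕ} {s t : ℤ → ZMod q} {i j : ℤ} :
    window s n i = -tupRev (window t n j) ↔
      ∀ k : ℕ, k < n → s (i + (k : ℕ)) = -t (j + ((n - (k + 1) : ℕ) : ℤ)) := by
  constructor
  · intro H k hk; exact congrFun H ⟨k, hk⟩
  · intro H; funext k; exact H k k.isLt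

lemma sum_window (hper : ∀ i : ℤ, s (i + (m : ℤ)) = s i) (i : ℤ) :
    ∑ j ∈ Finset.range m, s (i + (j : ℕ)) = wq s m := by
  have step : ∀ i : ℤ, (∑ j ∈ Finset.range m, s ((i + 1) + (j : ℕ)))
      = ∑ j ∈ Finset.range m, s (i + (j : ℕ)) := by
    intro i
    have h1 : ∑ j ∈ Finset.range (m + 1), s (i + (j : ℕ))
        = (∑ j ∈ Finset.range m, s (i + ((j + 1 : ℕ) : ℤ))) + s (i + ((0 : ℕ) : ℤ)) :=
      Finset.sum_range_succ' (fun j => s (i + (j : ℕ))) m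
    have h2 : ∑ j ∈ Finset.range (m + 1), s (i + (j : ℕ))
        = (∑ j ∈ Finset.range m, s (i + (j : ℕ))) + s (i + ((m : ℕ) : ℤ)) :=
      Finset.sum_range_succ (fun j => s (i + (j : ℕ))) m
    have h3 : s (i + ((m : ℕ) : ℤ)) = s (i + ((0 : ℕ) : ℤ)) := by
      push_cast
      simpa using hper i
    have h4 : (∑ j ∈ Finset.range m, s (i + ((j + 1 : ℕ) : ℤ)))
        = ∑ j ∈ Finset.range m, s ((i + 1) + (j : ℕ)) := by
      apply Finset.sum_congr rfl
      intro j _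
      congr 1
      push_cast
      ring
    rw [← h4]
    have := h1.symm.trans h2
    rw [h3] at this
    exact add_right_cancel this
  have this2 : (∑ j ∈ Finset.range m, s (i + (j : ℕ)))
      = ∑ j ∈ Finset.range m, s ((0 : ℤ) + (j : ℕ)) :=
    const_of_step (fun i => ∑ j ∈ Finset.range m, s (i + (j : ℕ))) step i
  rw [this2]
  simp [wq]

lemma ds {t : ℤ → ZMod q} (ht : D t = s) (x : ℤ) : s x = t (x + 1) - t x :=
  (congrFun ht x).symm

lemma tele {t : ℤ → ZMod q} (ht : D t = s) (k : ℕ) (i : ℤ) :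
    t (i + (k : ℕ)) = t i + ∑ j ∈ Finset.range k, s (i + (j : ℕ)) := by
  induction k with
  | zero => simp
  | succ k ih =>
    have h2 : i + ((k + 1 : ℕ) : ℤ) = (i + (k : ℕ)) + 1 := by push_cast; ring
    rw [h2, Finset.sum_range_succ]
    have h1 := ds ht (i + (k : ℕ))
    linear_combination ih - h1

lemma s_mul_period (hper : ∀ i : ℤ, s (i + (m : ℤ)) = s i) (a : ℕ) (i : ℤ) :
    s (i + (a : ℤ) * m) = s i := by
  induction a with
  | zero => simp
  | succ a ih =>
    push_cast
    have h1 : i + ((a : ℤ) + 1) * m = (i + (a : ℤ) * m) + (m : ℤ) := by ring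
    rw [h1, hper, ih]

lemma t_step_m {t : ℤ → ZMod q} (ht : D t = s) (hper : ∀ i : ℤ, s (i + (m : ℤ)) = s i)
    (i : ℤ) : t (i + (m : ℤ)) = t i + wq s m := by
  rw [show ((m : ℤ)) = ((m : ℕ) : ℤ) from rfl, tele ht m i, sum_window hper i]

lemma t_add_nat {t : ℤ → ZMod q} (ht : D t = s) (hper : ∀ i : ℤ, s (i + (m : ℤ)) = s i)
    (a : ℕ) (i : ℤ) : t (i + ((a * m : ℕ) : ℤ)) = t i + a • wq s m := by
  induction a with
  | zero => simp
  | succ a ih =>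
    have h1 : i + (((a + 1) * m : ℕ) : ℤ) = (i + ((a * m : ℕ) : ℤ)) + (m : ℤ) := by
      push_cast; ring
    rw [h1, t_step_m ht hper, ih, succ_nsmul, add_assoc]

lemma t_add_int {t : ℤ → ZMod q} (ht : D t = s) (hper : ∀ i : ℤ, s (i + (m : ℤ)) = s i)
    (d : ℤ) (i : ℤ) : t (i + (m : ℤ) * d) = t i + d • wq s m := by
  induction d using Int.induction_on with
  | zero => simp
  | succ k ih =>
    have h1 : i + (m : ℤ) * ((k : ℤ) + 1) = (i + (m : ℤ) * k) + (m : ℤ) := by ring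
    rw [h1, t_step_m ht hper, ih, add_zsmul, one_zsmul, add_assoc]
  | pred k ih =>
    have h1 : i + (m : ℤ) * (-(k : ℤ)) = (i + (m : ℤ) * (-(k : ℤ) - 1)) + (m : ℤ) := by ring
    rw [h1, t_step_m ht hper] at ih
    have h2 : t (i + (m : ℤ) * (-(k : ℤ) - 1)) = t i + (-(k : ℤ)) • wq s m - wq s m := by
      rw [← ih]; ring
    rw [h2, sub_zsmul, neg_zsmul, one_zsmul]
    ring

lemma least_period_dvd (hP : IsPeriod s m) {p : ℕ} (hp : 0 < p)
    (hper : ∀ i : ℤ, s (i + (p : ℤ)) = s i) : m ∣ p := by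
  obtain ⟨hm0, hsm, hleast⟩ := hP
  by_contra hnd
  set r := p % m with hr
  have hr0 : 0 < r := Nat.pos_of_ne_zero (fun h0 => hnd (Nat.dvd_of_mod_eq_zero h0))
  have hrlt : r < m := Nat.mod_lt _ hm0
  have hperr : ∀ i : ℤ, s (i + (r : ℤ)) = s i := by
    intro i
    have hn : p = r + (p / m) * m := by rw [hr]; exact (Nat.mod_add_div' p m).symm
    have hpz : (p : ℤ) = (r : ℤ) + ((p / m : ℕ) : ℤ) * m := by exact_mod_cast hn
    calc s (i + (r : ℤ)) = s ((i + (r : ℤ)) + ((p / m : ℕ) : ℤ) * m) :=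
          (s_mul_period hsm _ _).symm
      _ = s (i + (p : ℤ)) := by rw [show (i + (r : ℤ)) + ((p / m : ℕ) : ℤ) * m
            = i + (p : ℤ) by rw [hpz]; ring]
      _ = s i := hper i
  have := hleast r hr0 hperr
  omega

lemma key1 {n : ℕ} {t t' : ℤ → ZMod q} (ht : D t = s) (ht' : D t' = s) {i j : ℤ}
    (H : window t (n + 1) i = window t' (n + 1) j) :
    window s n i = window s n j ∧ t i = t' j := by
  rw [window_ext_iff] at H
  constructor
  · rw [window_ext_iff]
    intro k hk
    have e1 := H k (by omega)
    have e2 := H (k + 1) (by omega)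
    push_cast at e1 e2
    rw [ds ht, ds ht']
    rw [show i + (k : ℤ) + 1 = i + ((k : ℤ) + 1) by ring,
      show j + (k : ℤ) + 1 = j + ((k : ℤ) + 1) by ring, e1, e2]
  · have := H 0 (by omega)
    simpa using this

lemma key2 {n : ℕ} {t t' : ℤ → ZMod q} (ht : D t = s) (ht' : D t' = s) {i j : ℤ}
    (H : window t (n + 1) i = tupRev (window t' (n + 1) j)) :
    window s n i = -tupRev (window s n j) := by
  rw [window_rev_iff] at H
  rw [window_neg_rev_iff]
  intro k hk
  have e1 := H k (by omega)
  have e2 := H (k + 1) (by omega)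
  have hA : (n + 1 - (k + 1 + 1) : ℕ) = n - (k + 1) := by omega
  have hB : (n + 1 - (k + 1) : ℕ) = (n - (k + 1)) + 1 := by omega
  rw [hA] at e2
  rw [hB] at e1
  have e1' : t (i + (k : ℤ)) = t' (j + ((n - (k + 1) : ℕ) : ℤ) + 1) := by
    rw [show j + ((n - (k + 1) : ℕ) : ℤ) + 1 = j + (((n - (k + 1) : ℕ) : ℤ) + 1) by ring]
    rw [e1]; push_cast; ring_nf
  have e2' : t (i + (k : ℤ) + 1) = t' (j + ((n - (k + 1) : ℕ) : ℤ)) := by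
    rw [show i + (k : ℤ) + 1 = i + (((k + 1 : ℕ) : ℤ)) by push_cast; ring, e2]
  rw [ds ht, ds ht']
  linear_combination e2' - e1'

lemma key3 {n : ℕ} {t t' : ℤ → ZMod q} (ht : D t = s) (ht' : D t' = s) {i j : ℤ}
    (H : window t (n + 1) i = -tupRev (window t' (n + 1) j)) :
    window s n i = tupRev (window s n j) := by
  rw [window_neg_rev_iff] at H
  rw [window_rev_iff]
  intro k hk
  have e1 := H k (by omega)
  have e2 := H (k + 1) (by omega)
  have hA : (n + 1 - (k + 1 + 1) : ℕ) = n - (k + 1) := by omega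
  have hB : (n + 1 - (k + 1) : ℕ) = (n - (k + 1)) + 1 := by omega
  rw [hA] at e2
  rw [hB] at e1
  have e1' : t (i + (k : ℤ)) = -t' (j + ((n - (k + 1) : ℕ) : ℤ) + 1) := by
    rw [show j + ((n - (k + 1) : ℕ) : ℤ) + 1 = j + (((n - (k + 1) : ℕ) : ℤ) + 1) by ring]
    rw [e1]; push_cast; ring_nf
  have e2' : t (i + (k : ℤ) + 1) = -t' (j + ((n - (k + 1) : ℕ) : ℤ)) := by
    rw [show i + (k : ℤ) + 1 = i + (((k + 1 : ℕ) : ℤ)) by push_cast; ring, e2]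
  rw [ds ht, ds ht']
  linear_combination e2' - e1'

end OSeqAux

open OSeqAux

/-- If `S` is a special orientable sequence of order `n` and period `m` over `ℤ_q`
and `w_q(S)` has additive order `h` in `ℤ_q`, then every `T ∈ D⁻¹(S)` is a
special orientable sequence of order `n+1` and period `hm`, any two elements of
`D⁻¹(S)` are translates of one another, and `D⁻¹(S)` consists of `h` shifts of
each of `q/h` mutually special-o-disjoint special orientable sequences of order
`n+1` and period `hm` which are translates of one another. -/
theorem Dinv_of_special_orientable {q n m h : ℕ} (hq : 2 ≤ q) (hn : 1 ≤ n)
    (s : ℤ → ZMod q) (hS : IsSpecialOS s n m) (hh : addOrderOf (wq s m) = h) :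
    (∀ t : ℤ → ZMod q, D t = s → IsSpecialOS t (n + 1) (h * m)) ∧
    (∀ t t' : ℤ → ZMod q, D t = s → D t' = s → IsTranslate t t') ∧
    (∃ F : Fin (q / h) → ℤ → ZMod q,
      (∀ k, D (F k) = s ∧ IsSpecialOS (F k) (n + 1) (h * m)) ∧
      (∀ k k', k ≠ k' → SpecialODisjoint (n + 1) (F k) (F k')) ∧
      (∀ k k', IsTranslate (F k) (F k')) ∧
      (∀ t : ℤ → ZMod q, D t = s ↔
        ∃ (k : Fin (q / h)) (α : Fin h), t = shift (F k) ((α : ℕ) * (m : ℤ))) ∧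
      Function.Injective
        (fun p : Fin (q / h) × Fin h => shift (F p.1) ((p.2 : ℕ) * (m : ℤ)))) := by

  haveI : NeZero q := ⟨by omega⟩
  obtain ⟨⟨⟨hP, hwin⟩, hor⟩, hneg⟩ := hS
  have hm0 : 0 < m := hP.1
  have hsm : ∀ i : ℤ, s (i + (m : ℤ)) = s i := hP.2.1
  set w := wq s m with hw
  have hh0 : 0 < h := by rw [← hh]; exact addOrderOf_pos w
  have hhw : h • w = 0 := by rw [← hh]; exact addOrderOf_nsmul_eq_zero w
  have hhq : h ∣ q := by
    rw [← hh]
    have := addOrderOf_dvd_card (x := w)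
    rwa [ZMod.card] at this
  -- every preimage is a special OS of order n+1 and period h*m
  have main : ∀ t : ℤ → ZMod q, D t = s → IsSpecialOS t (n + 1) (h * m) := by
    intro t ht
    refine ⟨⟨⟨⟨Nat.mul_pos hh0 hm0, ?_, ?_⟩, ?_⟩, ?_⟩, ?_⟩
    · intro i
      have e := t_add_nat ht hsm h i
      rw [hhw, add_zero] at e
      exact e
    · intro p hp hper
      have hps : ∀ i : ℤ, s (i + (p : ℤ)) = s i := by
        intro i
        rw [ds ht, ds ht,
          show i + (p : ℤ) + 1 = (i + 1) + (p : ℤ) by ring, hper (i + 1), hper i]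
      obtain ⟨a, rfl⟩ := least_period_dvd hP hp hps
      have e : t ((0 : ℤ) + ((a * m : ℕ) : ℤ)) = t 0 + a • w := t_add_nat ht hsm a 0
      rw [show (a * m) = (m * a) from Nat.mul_comm a m, hper 0] at e
      have haw : a • w = 0 := by rwa [left_eq_add] at e
      have hha : h ∣ a := by
        rw [← hh]; exact addOrderOf_dvd_iff_nsmul_eq_zero.mpr haw
      obtain ⟨e2, rfl⟩ := hha
      exact Nat.le_of_dvd hp ⟨e2, by ring⟩
    · intro i j H
      obtain ⟨Hs, Ht⟩ := key1 ht ht H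
      obtain ⟨d, hd'⟩ := Int.ModEq.dvd (hwin i j Hs)
      have e := t_add_int ht hsm d i
      rw [show i + (m : ℤ) * d = j by linarith] at e
      rw [Ht] at e
      have hd0 : d • w = 0 := by rwa [left_eq_add] at e
      have hhd : (h : ℤ) ∣ d := by
        rw [← hh]; exact addOrderOf_dvd_iff_zsmul_eq_zero.mpr hd0
      obtain ⟨e2, rfl⟩ := hhd
      rw [Int.modEq_iff_dvd]
      exact ⟨e2, by push_cast; linarith⟩
    · intro i j H
      exact hneg i j (key2 ht ht H)
    · intro i j H
      exact hor i j (key3 ht ht H)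
  -- any two preimages are translates
  have transl : ∀ t t' : ℤ → ZMod q, D t = s → D t' = s → IsTranslate t t' := by
    intro t t' ht ht'
    refine ⟨t' 0 - t 0, fun i => ?_⟩
    have step : ∀ i : ℤ, (fun i => t' i - t i) (i + 1) = (fun i => t' i - t i) i := by
      intro i
      have h1 := ds ht i
      have h2 := ds ht' i
      simp only
      linear_combination h1 - h2
    have hc := const_of_step (fun i => t' i - t i) step i
    linear_combination hc
  -- an antiderivative
  have exD : ∃ σ : ℤ → ZMod q, D σ = s ∧ σ 0 = 0 := by
    refine ⟨fun i => (∑ j ∈ Finset.range i.toNat, s ((j : ℕ) : ℤ)) -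
        ∑ j ∈ Finset.range (-i).toNat, s (-((j : ℕ) : ℤ) - 1), ?_, by simp⟩
    funext i
    simp only [D]
    rcases le_or_gt 0 i with hi | hi
    · have h1 : (-(i + 1)).toNat = 0 := by omega
      have h2 : (-i).toNat = 0 := by omega
      have h3 : (i + 1).toNat = i.toNat + 1 := by omega
      rw [h1, h2, h3, Finset.sum_range_succ]
      simp only [Finset.range_zero, Finset.sum_empty]
      rw [Int.toNat_of_nonneg hi]
      ring
    · have h1 : (i + 1).toNat = 0 := by omega
      have h2 : i.toNat = 0 := by omega
      have h3 : (-i).toNat = (-(i + 1)).toNat + 1 := by omega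
      rw [h1, h2, h3, Finset.sum_range_succ]
      simp only [Finset.range_zero, Finset.sum_empty]
      rw [show -((((-(i + 1)).toNat : ℕ) : ℤ)) - 1 = i by omega]
      ring
  obtain ⟨σ, hσD, hσ0⟩ := exD
  -- the coset map
  have hdq : (q / h) * h = q := Nat.div_mul_cancel hhq
  have hd0 : 0 < q / h := Nat.div_pos (Nat.le_of_dvd (by omega) hhq) hh0
  haveI : NeZero (q / h) := ⟨by omega⟩
  have hdvd : (q / h) ∣ q := ⟨h, hdq.symm⟩
  set φ : ZMod q →+* ZMod (q / h) := ZMod.castHom hdvd (ZMod (q / h)) with hφ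
  have hφw : φ w = 0 := by
    have hq1 : q ∣ h * w.val := by
      have : ((h * w.val : ℕ) : ZMod q) = 0 := by
        push_cast
        rw [ZMod.natCast_rightInverse w, ← nsmul_eq_mul, hhw]
      exact (ZMod.natCast_eq_zero_iff _ _).mp this
    obtain ⟨c, hc⟩ : (q / h) ∣ w.val := by
      obtain ⟨c, hc⟩ := hq1
      refine ⟨c, ?_⟩
      apply Nat.eq_of_mul_eq_mul_left hh0
      calc h * w.val = q * c := hc
        _ = (q / h * h) * c := by rw [hdq]
        _ = h * (q / h * c) := by ring
    have h2 : φ w = ((w.val : ℕ) : ZMod (q / h)) := by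
      conv_lhs => rw [← ZMod.natCast_rightInverse (n := q) w]
      exact map_natCast φ w.val
    rw [h2, hc]
    exact (ZMod.natCast_eq_zero_iff _ _).mpr ⟨c, rfl⟩
  set E : Fin (q / h) × Fin h → ZMod q :=
    fun p => ((p.1 : ℕ) : ZMod q) + (p.2 : ℕ) • w with hE
  have hφE : ∀ p, φ (E p) = ((p.1 : ℕ) : ZMod (q / h)) := by
    intro p
    simp only [hE, map_add, map_natCast, map_nsmul, hφw, smul_zero, add_zero]
  have Einj : Function.Injective E := by
    intro p p' hEe
    have h1 : ((p.1 : ℕ) : ZMod (q / h)) = ((p'.1 : ℕ) : ZMod (q / h)) := by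
      rw [← hφE, ← hφE, hEe]
    have h2 : p.1 = p'.1 := by
      have h1' := congrArg ZMod.val h1
      rw [ZMod.val_cast_of_lt p.1.isLt, ZMod.val_cast_of_lt p'.1.isLt] at h1'
      exact Fin.ext h1'
    have h3 : ((p.2 : ℕ)) • w = ((p'.2 : ℕ)) • w := by
      have := hEe
      simp only [hE, h2] at this
      exact add_left_cancel this
    have h4 : (((p.2 : ℕ) : ℤ) - ((p'.2 : ℕ) : ℤ)) • w = 0 := by
      rw [sub_zsmul, natCast_zsmul, natCast_zsmul, h3]
      abel
    have h5 : (h : ℤ) ∣ ((p.2 : ℕ) : ℤ) - ((p'.2 : ℕ) : ℤ) := by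
      have h5' : (addOrderOf w : ℤ) ∣ ((p.2 : ℕ) : ℤ) - ((p'.2 : ℕ) : ℤ) :=
        addOrderOf_dvd_iff_zsmul_eq_zero.mpr h4
      rwa [hh] at h5'
    have h6 : p.2 = p'.2 := by
      have hb : (((p.2 : ℕ) : ℤ) - ((p'.2 : ℕ) : ℤ)).natAbs < ((h : ℤ)).natAbs := by
        have := p.2.isLt; have := p'.2.isLt; omega
      have := Int.eq_zero_of_dvd_of_natAbs_lt_natAbs h5 hb
      apply Fin.ext; omega
    exact Prod.ext h2 h6
  have Ebij : Function.Bijective E := by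
    rw [Fintype.bijective_iff_injective_and_card]
    refine ⟨Einj, ?_⟩
    simp [Fintype.card_prod, ZMod.card, hdq]
  -- the family F
  have hDF : ∀ c : ZMod q, D (fun i => σ i + c) = s := by
    intro c
    funext i
    simp only [D]
    linear_combination -(ds hσD i)
  refine ⟨main, transl,
    ⟨fun k i => σ i + ((k : ℕ) : ZMod q), fun k => ⟨hDF _, main _ (hDF _)⟩, ?_, ?_, ?_, ?_⟩⟩
  · -- special-o-disjoint
    intro k k' hkk
    refine ⟨⟨?_, ?_⟩, ?_⟩
    · intro i j H
      obtain ⟨Hs, Ht⟩ := key1 (hDF ((k : ℕ) : ZMod q)) (hDF ((k' : ℕ) : ZMod q)) H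
      obtain ⟨d, hd'⟩ := Int.ModEq.dvd (hwin i j Hs)
      have e := t_add_int (hDF ((k' : ℕ) : ZMod q)) hsm d i
      rw [show i + (m : ℤ) * d = j by linarith] at e
      have hkk' : ((k : ℕ) : ZMod q) = ((k' : ℕ) : ZMod q) + d • w := by
        rw [e] at Ht
        linear_combination Ht
      have h9 := congrArg φ hkk'
      simp only [map_add, map_natCast, map_zsmul, hφw, smul_zero, add_zero] at h9
      have h9' := congrArg ZMod.val h9
      rw [ZMod.val_cast_of_lt k.isLt, ZMod.val_cast_of_lt k'.isLt] at h9'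
      exact hkk (Fin.ext h9')
    · intro i j H
      exact hneg i j (key2 (hDF _) (hDF _) H)
    · intro i j H
      exact hor i j (key3 (hDF _) (hDF _) H)
  · -- translates
    intro k k'
    exact ⟨((k' : ℕ) : ZMod q) - ((k : ℕ) : ZMod q), fun i => by ring⟩
  · -- characterisation of preimages
    intro t
    constructor
    · intro ht
      have hts : ∀ i, t i = σ i + t 0 := by
        obtain ⟨c, hc⟩ := transl σ t hσD ht
        intro i
        rw [hc i, show c = t 0 from by rw [hc 0, hσ0, zero_add]]
      obtain ⟨p, hp⟩ := Ebij.2 (t 0)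
      refine ⟨p.1, p.2, ?_⟩
      funext i
      rw [hts i]
      simp only [shift]
      have e := t_add_nat hσD hsm (p.2 : ℕ) i
      rw [show i + ((p.2 : ℕ) : ℤ) * (m : ℤ) = i + (((p.2 : ℕ) * m : ℕ) : ℤ) by
        push_cast; ring, e, ← hp]
      simp only [hE]
      ring
    · rintro ⟨k, α, rfl⟩
      funext jj
      simp only [D, shift]
      have h1 := ds (hDF ((k : ℕ) : ZMod q)) (jj + ((α : ℕ) : ℤ) * (m : ℤ))
      have h2 : s (jj + ((α : ℕ) : ℤ) * (m : ℤ)) = s jj := s_mul_period hsm (α : ℕ) jj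
      rw [show jj + 1 + ((α : ℕ) : ℤ) * (m : ℤ) = jj + ((α : ℕ) : ℤ) * (m : ℤ) + 1 by ring]
      linear_combination h2 - h1
  · -- injectivity
    intro p p' hpe
    have h0 := congrFun hpe 0
    simp only [shift] at h0
    have e1 := t_add_nat hσD hsm (p.2 : ℕ) (0 : ℤ)
    have e2 := t_add_nat hσD hsm (p'.2 : ℕ) (0 : ℤ)
    rw [show (0 : ℤ) + ((p.2 : ℕ) : ℤ) * (m : ℤ) = (0 : ℤ) + (((p.2 : ℕ) * m : ℕ) : ℤ) by
      push_cast; ring] at h0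
    rw [show (0 : ℤ) + ((p'.2 : ℕ) : ℤ) * (m : ℤ) = (0 : ℤ) + (((p'.2 : ℕ) * m : ℕ) : ℤ) by
      push_cast; ring] at h0
    rw [e1, e2, hσ0] at h0
    apply Einj
    simp only [hE]
    linear_combination h0
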